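/- Let A ∈ ℝ^{n×n}, B ∈ ℝ^{n×m}, T > 0 and t ∈ [0,T). Let χ_0,…,χ_{N−1} ∈ ℝⁿ and μ_0,…,μ_{N−1} ∈ ℝᵐ, and define χ_k(t) = e^{At} χ_k + (∫₀ᵗ e^{A(t−τ)}B dτ) μ_k. If the (n+m)×N matrix stacking [χ_0 ⋯ χ_{N−1}] over [μ_0 ⋯ μ_{N−1}] has rank n+m, then the (n+m)×N matrix stacking [χ_0(t) ⋯ χ_{N−1}(t)] over [μ_0 ⋯ μ_{N−1}] also has rank n+m. -/

import Mathlib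

theorem stmt13 (n m N : ℕ) (A : Matrix (Fin n) (Fin n) ℝ) (B : Matrix (Fin n) (Fin m) ℝ)
    (T t : ℝ) (hT : 0 < T) (ht : t ∈ Set.Ico (0:ℝ) T)
    (χ : Fin N → Fin n → ℝ) (μ : Fin N → Fin m → ℝ)
    (h : (Matrix.of fun (i : Fin n ⊕ Fin m) (k : Fin N) =>
        Sum.elim (fun i' => χ k i') (fun j => μ k j) i).rank = n + m) :
    (Matrix.of fun (i : Fin n ⊕ Fin m) (k : Fin N) =>
        Sum.elim (fun i' =>
            ((NormedSpace.exp (t • A)).mulVec (χ k)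
              + (Matrix.of fun (a : Fin n) (b : Fin m) =>
                  ∫ τ in (0:ℝ)..t, (NormedSpace.exp ((t - τ) • A) * B) a b).mulVec (μ k)) i')
          (fun j => μ k j) i).rank = n + m := by
  set E : Matrix (Fin n) (Fin n) ℝ := NormedSpace.exp (t • A) with hE
  set G : Matrix (Fin n) (Fin m) ℝ :=
    Matrix.of fun (a : Fin n) (b : Fin m) =>
      ∫ τ in (0:ℝ)..t, (NormedSpace.exp ((t - τ) • A) * B) a b with hG
  set X : Matrix (Fin n ⊕ Fin m) (Fin N) ℝ :=
    Matrix.of fun (i : Fin n ⊕ Fin m) (k : Fin N) =>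
      Sum.elim (fun i' => χ k i') (fun j => μ k j) i with hX
  set P : Matrix (Fin n ⊕ Fin m) (Fin n ⊕ Fin m) ℝ := Matrix.fromBlocks E G 0 1 with hP
  have key : (Matrix.of fun (i : Fin n ⊕ Fin m) (k : Fin N) =>
        Sum.elim (fun i' => (E.mulVec (χ k) + G.mulVec (μ k)) i')
          (fun j => μ k j) i) = P * X := by
    ext i k
    cases i with
    | inl i =>
      simp [Matrix.mul_apply, hP, hX, Matrix.mulVec, dotProduct,
        Fintype.sum_sum_type, Matrix.fromBlocks_apply₁₁, Matrix.fromBlocks_apply₁₂]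
    | inr j =>
      simp [Matrix.mul_apply, hP, hX, Matrix.mulVec, dotProduct,
        Fintype.sum_sum_type, Matrix.fromBlocks_apply₂₁, Matrix.fromBlocks_apply₂₂,
        Matrix.one_apply, Finset.sum_ite_eq]
  have hdet : IsUnit P.det := by
    rw [hP, Matrix.det_fromBlocks_zero₂₁, Matrix.det_one, mul_one]
    exact (Matrix.isUnit_iff_isUnit_det E).mp (Matrix.isUnit_exp (t • A))
  rw [key, Matrix.rank_mul_eq_right_of_isUnit_det P X hdet]; exact h
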